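/- Let R be a 2-torsion free commutative ring with identity, n ≥ 2 and k ≥ 1 integers. Then Z(Tₙ(R))_k = R·1: a matrix W ∈ Tₙ(R) satisfies [W, X]_k = 0 for all X ∈ Tₙ(R) if and only if W is an R-scalar multiple of the identity matrix. -/

import Mathlib

/-- The iterated commutator: `iterComm 0 x y = x`, `iterComm (i+1) x y = [iterComm i x y, y]`. -/
def iterComm {G : Type*} [Ring G] : ℕ → G → G → G
  | 0, x, _ => x
  | i + 1, x, y => iterComm i x y * y - y * iterComm i x y

lemma iterComm_succ {G : Type*} [Ring G] (m : ℕ) (x y : G) :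
    iterComm (m+1) x y = iterComm m x y * y - y * iterComm m x y := rfl

lemma iterComm_zero_of_comm {G : Type*} [Ring G] (x y : G) (h : x * y = y * x) :
    ∀ m, 1 ≤ m → iterComm m x y = 0 := by
  intro m hm
  induction m with
  | zero => omega
  | succ m ih =>
    rcases Nat.eq_zero_or_pos m with rfl | hpos
    · simp [iterComm, h]
    · rw [iterComm_succ, ih hpos]; simp

lemma iterComm_idem {G : Type*} [Ring G] (A e : G) (he : e * e = e) (m : ℕ) :
    iterComm (m+1) A e
      = (A*e - e*A*e) + ((-1 : ℤ)^(m+1)) • (e*A - e*A*e) := by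
  have hPe : (A*e - e*A*e) * e = A*e - e*A*e := by
    rw [sub_mul, mul_assoc A e e, he, mul_assoc (e*A) e e, he]
  have heP : e * (A*e - e*A*e) = 0 := by
    rw [mul_sub, ← mul_assoc, ← mul_assoc, ← mul_assoc, he, sub_self]
  have hQe : (e*A - e*A*e) * e = 0 := by
    rw [sub_mul, mul_assoc (e*A) e e, he, sub_self]
  have heQ : e * (e*A - e*A*e) = e*A - e*A*e := by
    rw [mul_sub, ← mul_assoc, ← mul_assoc, he, ← mul_assoc, he]
  induction m with
  | zero =>
    rw [iterComm_succ]
    simp only [iterComm, pow_one, neg_smul, one_smul]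
    abel
  | succ m ih =>
    rw [iterComm_succ, ih]
    rw [add_mul, mul_add, smul_mul_assoc, mul_smul_comm, hPe, heP, hQe, heQ]
    rw [smul_zero, add_zero]
    have : (-1 : ℤ)^(m+1+1) = -((-1:ℤ)^(m+1)) := by ring
    rw [this, neg_smul]
    abel

/-- The algebra `Tₙ(R)` of `n × n` upper triangular matrices over `R`
(entries below the diagonal vanish), as a subalgebra of `Mₙ(R)`. -/
def upperTriAlg (R : Type*) [CommRing R] (n : ℕ) :
    Subalgebra R (Matrix (Fin n) (Fin n) R) where
  carrier := {X | X.BlockTriangular (id : Fin n → Fin n)}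
  mul_mem' := fun {a b} (ha : Matrix.BlockTriangular a id) (hb : Matrix.BlockTriangular b id) =>
    Matrix.BlockTriangular.mul ha hb
  add_mem' := fun {a b} (ha : Matrix.BlockTriangular a id) (hb : Matrix.BlockTriangular b id) =>
    Matrix.BlockTriangular.add ha hb
  algebraMap_mem' := fun r => by
    show Matrix.BlockTriangular _ id
    rw [Matrix.algebraMap_eq_diagonal]
    exact Matrix.blockTriangular_diagonal _

lemma iterComm_coe {R : Type*} [CommRing R] {n : ℕ} (W X : upperTriAlg R n) (m : ℕ) :
    ((iterComm m W X : upperTriAlg R n) : Matrix (Fin n) (Fin n) R)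
      = iterComm m (W : Matrix (Fin n) (Fin n) R) (X : Matrix (Fin n) (Fin n) R) := by
  induction m with
  | zero => rfl
  | succ m ih => rw [iterComm_succ, iterComm_succ, ← ih]; push_cast; ring

lemma stdBasis_mem {R : Type*} [CommRing R] {n : ℕ} (i j : Fin n) (h : i ≤ j) (c : R) :
    Matrix.single i j c ∈ upperTriAlg R n := by
  intro a b hab
  simp only [id] at hab
  rw [Matrix.single]
  simp only [Matrix.of_apply, ite_eq_right_iff]
  rintro ⟨rfl, rfl⟩
  exact absurd h (not_le.mpr hab)

lemma neg_one_pow_smul_eq_zero {R : Type*} [CommRing R] {x : R} {m : ℕ}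
    (h : ((-1 : ℤ)^m) • x = 0) : x = 0 := by
  rcases Nat.even_or_odd m with he | ho
  · rw [he.neg_one_pow, one_smul] at h; exact h
  · rw [ho.neg_one_pow, neg_smul, one_smul, neg_eq_zero] at h; exact h

/-- over a 2-torsion free commutative ring `R` with identity, for `n ≥ 2` and
`k ≥ 1`, one has `Z(Tₙ(R))_k = R·1`: a matrix `W ∈ Tₙ(R)` satisfies `[W, X]_k = 0` for all
`X ∈ Tₙ(R)` if and only if `W` is an `R`-scalar multiple of the identity matrix. -/
theorem Zk_upperTriangular_eq_scalars
    {R : Type*} [CommRing R] (htf : ∀ r : R, r + r = 0 → r = 0)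
    (n : ℕ) (hn : 2 ≤ n) (k : ℕ) (hk : 1 ≤ k)
    (W : upperTriAlg R n) :
    (∀ X : upperTriAlg R n, iterComm k W X = 0) ↔
    (∃ r : R, W = r • (1 : upperTriAlg R n)) := by
  constructor
  · intro h
    obtain ⟨m, rfl⟩ : ∃ m, k = m + 1 := ⟨k - 1, by omega⟩
    set A : Matrix (Fin n) (Fin n) R := (W : Matrix (Fin n) (Fin n) R) with hA
    have hcomm : ∀ e : Matrix (Fin n) (Fin n) R, e ∈ upperTriAlg R n → e * e = e →
        (A*e - e*A*e) + ((-1 : ℤ)^(m+1)) • (e*A - e*A*e) = 0 := by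
      intro e hmem hid
      have h0 := h ⟨e, hmem⟩
      have := congrArg (Subtype.val) h0
      rw [iterComm_coe] at this
      rw [← iterComm_idem A e hid m]
      exact this
    -- off-diagonal entries vanish
    have hoff : ∀ i j : Fin n, j ≠ i → A i j = 0 := by
      intro i j hij
      have := hcomm (Matrix.single i i 1) (stdBasis_mem i i le_rfl 1)
        (by rw [Matrix.single_mul_single_same, one_mul])
      have hentry := congrFun (congrFun this i) j
      simp only [Matrix.add_apply, Matrix.sub_apply, Matrix.smul_apply, Matrix.zero_apply,
        Matrix.mul_single_apply_of_ne _ _ _ _ _ hij,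
        Matrix.single_mul_apply_same, one_mul, sub_self, zero_add, sub_zero]
        at hentry
      exact neg_one_pow_smul_eq_zero hentry
    -- diagonal entries all equal
    have hdiag : ∀ i j : Fin n, i < j → A i i = A j j := by
      intro i j hij
      have hne : j ≠ i := ne_of_gt hij
      set e : Matrix (Fin n) (Fin n) R :=
        Matrix.single i i 1 + Matrix.single i j 1 with hedef
      have hid : e * e = e := by
        rw [hedef, add_mul, mul_add, mul_add,
          Matrix.single_mul_single_same, Matrix.single_mul_single_same,
          Matrix.single_mul_single_of_ne _ _ _ _ hne,
          Matrix.single_mul_single_of_ne _ _ _ _ hne, one_mul]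
        abel
      have hmem : e ∈ upperTriAlg R n :=
        add_mem (stdBasis_mem i i le_rfl 1) (stdBasis_mem i j (le_of_lt hij) 1)
      have := hcomm e hmem hid
      have hentry := congrFun (congrFun this i) j
      have h1 : (A * e) i j = A i i := by
        rw [hedef, mul_add, Matrix.add_apply,
          Matrix.mul_single_apply_of_ne _ _ _ _ _ hne,
          Matrix.mul_single_apply_same, mul_one, zero_add]
      have h2 : (e * A) i j = A j j := by
        rw [hedef, add_mul, Matrix.add_apply,
          Matrix.single_mul_apply_same,
          Matrix.single_mul_apply_same, one_mul, one_mul,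
          hoff i j hne, zero_add]
      have h3 : (e * A * e) i j = A i i := by
        have h4 : (e * A) i i = A i i := by
          rw [hedef, add_mul, Matrix.add_apply,
            Matrix.single_mul_apply_same,
            Matrix.single_mul_apply_same, one_mul, one_mul,
            hoff j i hij.ne, add_zero]
        rw [hedef, mul_add, Matrix.add_apply,
          Matrix.mul_single_apply_of_ne _ _ _ _ _ hne,
          Matrix.mul_single_apply_same, mul_one, zero_add, ← hedef, h4]
      simp only [Matrix.add_apply, Matrix.sub_apply, Matrix.smul_apply, Matrix.zero_apply,
        h1, h2, h3, sub_self, zero_add] at hentry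
      exact (sub_eq_zero.mp (neg_one_pow_smul_eq_zero hentry)).symm
    -- conclude
    have h0 : (0 : ℕ) < n := by omega
    refine ⟨A ⟨0, h0⟩ ⟨0, h0⟩, ?_⟩
    apply Subtype.ext
    show A = _
    have : ((A ⟨0, h0⟩ ⟨0, h0⟩ • (1 : upperTriAlg R n) : upperTriAlg R n) : Matrix (Fin n) (Fin n) R)
        = A ⟨0, h0⟩ ⟨0, h0⟩ • (1 : Matrix (Fin n) (Fin n) R) := rfl
    rw [this]
    ext a b
    rcases eq_or_ne a b with rfl | hab
    · rw [Matrix.smul_apply, Matrix.one_apply_eq, smul_eq_mul, mul_one]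
      rcases eq_or_ne a ⟨0, h0⟩ with rfl | ha
      · rfl
      · refine (hdiag ⟨0, h0⟩ a ?_).symm
        rw [Fin.lt_def]
        exact Nat.pos_of_ne_zero fun hv => ha (Fin.ext hv)
    · rw [Matrix.smul_apply, Matrix.one_apply_ne hab, smul_zero]
      exact hoff a b (Ne.symm hab)
  · rintro ⟨r, rfl⟩
    intro X
    have hr : (r • (1 : upperTriAlg R n)) = algebraMap R (upperTriAlg R n) r :=
      (Algebra.algebraMap_eq_smul_one r).symm
    exact iterComm_zero_of_comm _ _ (by rw [hr]; exact Algebra.commutes r X) k hk
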